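/- The Diophantine equation X² + 1 = Y^q has no solutions in integers X, Y ≥ 2 and q ≥ 2. -/

import Mathlib

open Finset Zsqrtd

lemma two_adic_key (q : ℕ) (hq : q.Prime) (hodd : Odd q) (a : ℤ) (ha2 : Even a)
    (ha0 : a ≠ 0)
    (hs : ∑ j ∈ Finset.range ((q-1)/2), (-1:ℤ)^j * (q.choose (2*j+2)) * a^(2*j) = 0) :
    False := by
  have hq2 : q ≠ 2 := by rintro rfl; exact (Nat.not_odd_iff_even.mpr even_two) hodd
  have hq3 : 3 ≤ q := by have := hq.two_le; omega
  have hqodd : q % 2 = 1 := Nat.odd_iff.mp hodd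
  have hq1 : q - 1 ≠ 0 := by omega
  set v := (q-1).factorization 2 with hv
  have hv1 : 1 ≤ v := Nat.Prime.factorization_pos_of_dvd Nat.prime_two hq1 (by omega)
  set A := a.natAbs with hA
  have hA0 : A ≠ 0 := Int.natAbs_ne_zero.mpr ha0
  have hA2 : 2 ∣ A := by
    have : (2:ℤ) ∣ a := ha2.two_dvd
    exact Int.natAbs_dvd_natAbs.mpr this
  -- key divisibility for j ≥ 1
  have key : ∀ j, 1 ≤ j → j < (q-1)/2 → (2^v : ℤ) ∣ (-1:ℤ)^j * (q.choose (2*j+2)) * a^(2*j) := by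
    intro j hj1 hj2
    have h2j : 2*j + 2 ≤ q := by omega
    set C := q.choose (2*j+2) with hC
    have hC0 : C ≠ 0 := (Nat.choose_pos h2j).ne'
    -- identity : (2j+2)*((2j+1)*C) = q*((q-1)*choose (q-2) (2j))
    have e1 : q * Nat.choose (q-1) (2*j+1) = C * (2*j+2) := by
      have := Nat.add_one_mul_choose_eq (q-1) (2*j+1)
      have hq1' : q - 1 + 1 = q := by omega
      rw [hq1'] at this
      simpa [hC] using this
    have e2 : (q-1) * Nat.choose (q-2) (2*j) = Nat.choose (q-1) (2*j+1) * (2*j+1) := by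
      have := Nat.add_one_mul_choose_eq (q-2) (2*j)
      have hq2' : q - 2 + 1 = q - 1 := by omega
      rw [hq2'] at this
      simpa using this
    have E : (2*j+2) * ((2*j+1) * C) = q * ((q-1) * Nat.choose (q-2) (2*j)) := by
      calc (2*j+2) * ((2*j+1) * C) = (C * (2*j+2)) * (2*j+1) := by ring
        _ = (q * Nat.choose (q-1) (2*j+1)) * (2*j+1) := by rw [e1]
        _ = q * (Nat.choose (q-1) (2*j+1) * (2*j+1)) := by ring
        _ = q * ((q-1) * Nat.choose (q-2) (2*j)) := by rw [← e2]
    -- factorization at 2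
    have hCq2 : Nat.choose (q-2) (2*j) ≠ 0 := (Nat.choose_pos (by omega)).ne'
    have f := fun n : ℕ => n.factorization 2
    have hfj : (j+1).factorization 2 ≤ j := by
      by_contra hcon
      push_neg at hcon
      have h1 : 2 ^ (j+1).factorization 2 ≤ j + 1 := Nat.ordProj_le 2 (by omega)
      have h2 : j + 1 ≤ 2^j := Nat.lt_two_pow_self
      have h3 : 2^(j+1) ≤ 2^((j+1).factorization 2) := Nat.pow_le_pow_right (by norm_num) hcon
      have h4 : (2:ℕ)^j < 2^(j+1) := Nat.pow_lt_pow_right (by norm_num) (by omega)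
      omega
    have hfac : v ≤ (C * A^(2*j)).factorization 2 := by
      have hL : ((2*j+2) * ((2*j+1) * C)).factorization 2
          = (2*(j+1)).factorization 2 + ((2*j+1).factorization 2 + C.factorization 2) := by
        rw [show 2*j+2 = 2*(j+1) by ring]
        rw [Nat.factorization_mul (by omega) (Nat.mul_ne_zero (by omega) hC0),
          Nat.factorization_mul (by omega) hC0]
        simp [Finsupp.add_apply]
      have hR : v ≤ (q * ((q-1) * Nat.choose (q-2) (2*j))).factorization 2 := by
        rw [Nat.factorization_mul (by omega) (Nat.mul_ne_zero (by omega) hCq2),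
          Nat.factorization_mul (by omega) hCq2]
        simp only [Finsupp.add_apply]
        omega
      rw [← E] at hR
      rw [hL] at hR
      have h21 : (2*(j+1)).factorization 2 = 1 + (j+1).factorization 2 := by
        rw [Nat.factorization_mul (by omega) (by omega)]
        simp [Nat.Prime.factorization_self Nat.prime_two, Finsupp.add_apply]
      have h22 : (2*j+1).factorization 2 = 0 :=
        Nat.factorization_eq_zero_of_not_dvd (by omega)
      have hApow : 2*j ≤ (A^(2*j)).factorization 2 := by
        rw [Nat.factorization_pow]
        have : 1 ≤ A.factorization 2 :=
          Nat.Prime.factorization_pos_of_dvd Nat.prime_two hA0 hA2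
        simp only [Finsupp.smul_apply, smul_eq_mul]
        nlinarith
      rw [Nat.factorization_mul hC0 (pow_ne_zero _ hA0)]
      simp only [Finsupp.add_apply]
      omega
    have hdvdN : 2^v ∣ C * A^(2*j) :=
      (Nat.Prime.pow_dvd_iff_le_factorization Nat.prime_two
        (Nat.mul_ne_zero hC0 (pow_ne_zero _ hA0))).mpr hfac
    have hdvdZ : (2^v : ℤ) ∣ ((C : ℤ) * (A:ℤ)^(2*j)) := by
      exact_mod_cast Int.natCast_dvd_natCast.mpr hdvdN
    have habs : ((A:ℤ))^(2*j) = a^(2*j) := by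
      rw [hA]
      rcases Int.natAbs_eq a with h | h
      · rw [← h]
      · rw [show a = -(A:ℤ) by omega]
        rw [neg_pow]
        simp [pow_mul]
    rw [habs] at hdvdZ
    have : (-1:ℤ)^j * (C:ℤ) * a^(2*j) = (-1:ℤ)^j * ((C:ℤ) * a^(2*j)) := by ring
    rw [this]
    exact Dvd.dvd.mul_left hdvdZ _
  -- conclude 2^v ∣ choose q 2
  set n' := (q-1)/2 with hn'
  have hn'1 : 1 ≤ n' := by omega
  have hsplit := Finset.sum_range_succ' (fun j => (-1:ℤ)^j * (q.choose (2*j+2)) * a^(2*j)) (n'-1)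
  rw [show n'-1+1 = n' by omega] at hsplit
  rw [hsplit] at hs
  norm_num at hs
  have hdvd0 : (2^v : ℤ) ∣ (q.choose 2 : ℤ) := by
    have hdsum : (2^v : ℤ) ∣ ∑ k ∈ Finset.range (n'-1),
        (-1:ℤ)^(k+1) * (q.choose (2*(k+1)+2)) * a^(2*(k+1)) := by
      refine Finset.dvd_sum fun k hk => ?_
      exact key (k+1) (by omega) (by have := Finset.mem_range.mp hk; omega)
    have heq : (q.choose 2 : ℤ) = -∑ k ∈ Finset.range (n'-1),
        (-1:ℤ)^(k+1) * (q.choose (2*(k+1)+2)) * a^(2*(k+1)) := by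
      linarith [hs]
    rw [heq]
    exact dvd_neg.mpr hdsum
  have hdvdN : 2^v ∣ q.choose 2 := by exact_mod_cast hdvd0
  have hch2 : 2 * q.choose 2 = q * (q-1) := by
    have := Nat.add_one_mul_choose_eq (q-1) 1
    rw [show q-1+1 = q by omega] at this
    rw [Nat.choose_one_right] at this
    have this2 : q * (q-1) = q.choose 2 * 2 := by simpa using this
    omega
  have hdvd2 : 2^(v+1) ∣ q * (q-1) := by
    rw [← hch2, pow_succ]
    calc (2:ℕ)^v * 2 ∣ q.choose 2 * 2 := Nat.mul_dvd_mul_right hdvdN 2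
      _ = 2 * q.choose 2 := by ring
  have hcop : Nat.Coprime (2^(v+1)) q := Nat.Coprime.pow_left _ (by
    have : Nat.Coprime 2 q := (Nat.coprime_primes Nat.prime_two hq).mpr (by omega)
    exact this)
  have hdvd3 : 2^(v+1) ∣ q - 1 := hcop.dvd_of_dvd_mul_left hdvd2
  exact Nat.pow_succ_factorization_not_dvd hq1 Nat.prime_two hdvd3


local notation "ℤi" => GaussianInt

noncomputable def imHom : GaussianInt →+ ℤ :=
  AddMonoidHom.mk' Zsqrtd.im (fun _ _ => rfl)

lemma im_pow_eq (a b : ℤ) (hb : b * b = 1) (q n : ℕ) (h2n : 2*n = q + 1) :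
    ((⟨a, b⟩ : GaussianInt) ^ q).im
      = ∑ j ∈ Finset.range n, b * (-1:ℤ)^(n-1-j) * (q.choose (2*j)) * a^(2*j) := by
  set I : GaussianInt := ⟨0, 1⟩ with hI
  have hI2 : I^2 = -1 := by
    ext <;> simp [hI, pow_two, Zsqrtd.re_mul, Zsqrtd.im_mul]
  have hbI2 : ((b:GaussianInt) * I)^2 = -1 := by
    rw [mul_pow, hI2]
    have : ((b:GaussianInt))^2 = ((b*b : ℤ) : GaussianInt) := by push_cast; ring
    rw [this, hb]
    simp
  have heven : ∀ t : ℕ, ((b:GaussianInt) * I)^(2*t) = ((-1:GaussianInt))^t := by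
    intro t; rw [pow_mul, hbI2]
  have hoddp : ∀ t : ℕ, ((b:GaussianInt) * I)^(2*t+1)
      = ((-1:GaussianInt))^t * ((b:GaussianInt) * I) := by
    intro t; rw [pow_add, heven, pow_one]
  have hmulI : ∀ c : ℤ, ((c:GaussianInt) * I).im = c := by
    intro c
    simp [hI, Zsqrtd.im_mul]
  have hw : (⟨a,b⟩ : GaussianInt) = (a:GaussianInt) + (b:GaussianInt) * I := by
    ext <;> simp [hI]
  rw [hw, add_pow]
  set F : ℕ → GaussianInt :=
    fun k => (a:GaussianInt)^k * ((b:GaussianInt) * I)^(q-k) * ((q.choose k : ℕ) : GaussianInt)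
    with hF
  have hmap : (∑ k ∈ Finset.range (q+1), F k).im = ∑ k ∈ Finset.range (q+1), (F k).im := by
    exact map_sum imHom F (Finset.range (q+1))
  rw [hmap]
  rw [← Finset.sum_filter_add_sum_filter_not (Finset.range (q+1)) Even (fun k => (F k).im)]
  have hodd0 : ∑ k ∈ (Finset.range (q+1)).filter (fun k => ¬ Even k), (F k).im = 0 := by
    refine Finset.sum_eq_zero fun k hk => ?_
    simp only [Finset.mem_filter, Finset.mem_range] at hk
    obtain ⟨hk1, hk2⟩ := hk
    have : ∃ t, q - k = 2*t := by
      rcases Nat.even_or_odd k with h | h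
      · exact absurd h hk2
      · rcases h with ⟨m, hm⟩
        exact ⟨n - 1 - m, by omega⟩
    obtain ⟨t, ht⟩ := this
    have : F k = (((a^k * (-1)^t * (q.choose k : ℤ)) : ℤ) : GaussianInt) := by
      rw [hF]; dsimp only
      rw [ht, heven]
      push_cast
      ring
    rw [this, Zsqrtd.im_intCast]
  rw [hodd0, add_zero]
  refine (Finset.sum_bij' (fun (k : ℕ) _ => k / 2) (fun (j : ℕ) _ => 2 * j)
    ?_ ?_ ?_ ?_ ?_).symm.symm
  · intro k hk
    simp only [Finset.mem_filter, Finset.mem_range] at hk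
    simp only [Finset.mem_range]
    rcases hk.2 with ⟨m, hm⟩
    omega
  · intro j hj
    simp only [Finset.mem_range] at hj
    simp only [Finset.mem_filter, Finset.mem_range]
    exact ⟨by omega, ⟨j, by omega⟩⟩
  · intro k hk
    simp only [Finset.mem_filter, Finset.mem_range] at hk
    rcases hk.2 with ⟨m, hm⟩
    omega
  · intro j hj
    omega
  · intro k hk
    simp only [Finset.mem_filter, Finset.mem_range] at hk
    rcases hk.2 with ⟨m, hm⟩
    have hkm : k = 2 * m := by omega
    subst hkm
    have hj2 : 2 * m / 2 = m := by omega
    rw [hj2]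
    have hj : m < n := by omega
    have hqk : q - 2*m = 2*(n-1-m)+1 := by omega
    have hFm : F (2*m) = ((a^(2*m) * (-1)^(n-1-m) * b * (q.choose (2*m) : ℤ) : ℤ) : GaussianInt) * I := by
      rw [hF]; dsimp only
      rw [hqk, hoddp]
      push_cast
      ring
    rw [hFm, hmulI]
    push_cast
    ring

lemma gaussian_norm_pow (w : GaussianInt) (m : ℕ) : (w^m).norm = w.norm ^ m := by
  induction m with
  | zero => simp [Zsqrtd.norm_one]
  | succ k ih => rw [pow_succ, Zsqrtd.norm_mul, ih, pow_succ]

lemma gaussian_unit_pow_four (u : GaussianInt) (hu : IsUnit u) : u ^ 4 = 1 := by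
  have hnorm : u.norm.natAbs = 1 := Zsqrtd.norm_eq_one_iff.mpr hu
  have hnn : 0 ≤ u.norm := Zsqrtd.norm_nonneg (by norm_num) u
  have hn1 : u.norm = 1 := by omega
  have hrs : u.re * u.re + u.im * u.im = 1 := by
    have h := Zsqrtd.norm_def u
    rw [hn1] at h
    linarith
  have hsq : u^2 = 1 ∨ u^2 = -1 := by
    rcases eq_or_ne u.re 0 with hr | hr
    · right
      have him2 : u.im * u.im = 1 := by rw [hr] at hrs; linarith
      ext
      · simp only [pow_two, Zsqrtd.re_mul, hr]
        simp [him2]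
      · simp [pow_two, Zsqrtd.im_mul, hr]
    · left
      have hs0 : u.im = 0 := by
        by_contra hs
        have h1 : 1 ≤ |u.re| := Int.one_le_abs hr
        have h2 : 1 ≤ |u.im| := Int.one_le_abs hs
        nlinarith [abs_mul_abs_self u.re, abs_mul_abs_self u.im]
      have hre2 : u.re * u.re = 1 := by rw [hs0] at hrs; linarith
      ext
      · simp only [pow_two, Zsqrtd.re_mul, hs0]
        simp [hre2]
      · simp [pow_two, Zsqrtd.im_mul, hs0]
  have : u^4 = (u^2)^2 := by ring
  rw [this]
  rcases hsq with h | h <;> rw [h] <;> ring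

lemma lebesgue_odd_prime (X Y : ℤ) (q : ℕ) (hq : q.Prime) (hodd : Odd q)
    (hX : 2 ≤ X) (hY : 2 ≤ Y) (h : X^2 + 1 = Y^q) : False := by
  have hq2 : q ≠ 2 := by rintro rfl; exact (Nat.not_odd_iff_even.mpr even_two) hodd
  have hq3 : 3 ≤ q := by have := hq.two_le; omega
  have hqodd : q % 2 = 1 := Nat.odd_iff.mp hodd
  set n : ℕ := (q+1)/2 with hn
  have h2n : 2*n = q+1 := by omega
  -- Y odd
  have hYodd : Odd Y := by
    rcases Int.even_or_odd Y with hYe | hYo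
    · exfalso
      obtain ⟨t, ht⟩ := hYe
      have h4 : (4:ℤ) ∣ Y^q := by
        refine ⟨t^2 * Y^(q-2), ?_⟩
        have : Y^q = Y^2 * Y^(q-2) := by rw [← pow_add]; congr 1; omega
        rw [this, ht]; ring
      rw [← h] at h4
      obtain ⟨e, he⟩ := h4
      rcases Int.even_or_odd X with hXe | hXo
      · obtain ⟨s, hsx⟩ := hXe
        have : X^2 + 1 = 4*(s*s) + 1 := by rw [hsx]; ring
        rw [this] at he; omega
      · obtain ⟨s, hsx⟩ := hXo
        have : X^2 + 1 = 4*(s*s+s) + 2 := by rw [hsx]; ring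
        rw [this] at he; omega
    · exact hYo
  have hXeven : Even X := by
    rcases Int.even_or_odd X with hXe | hXo
    · exact hXe
    · exfalso
      have h1 : Odd (Y^q) := hYodd.pow
      rw [← h] at h1
      rcases hXo with ⟨s, hsx⟩
      rcases h1 with ⟨t, ht⟩
      have : X^2+1 = 2*(2*s*s+2*s+1) := by rw [hsx]; ring
      omega
  obtain ⟨c, hc⟩ := hXeven
  -- Gaussian integer setup
  set z : GaussianInt := ⟨X, 1⟩ with hz
  have hzz : z * star z = ((Y : GaussianInt))^q := by
    have h1 : z * star z = (((X^2 + 1 : ℤ)) : GaussianInt) := by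
      ext
      · simp only [hz, Zsqrtd.re_mul, Zsqrtd.re_star, Zsqrtd.im_star, Zsqrtd.re_intCast]
        ring
      · simp only [hz, Zsqrtd.im_mul, Zsqrtd.re_star, Zsqrtd.im_star, Zsqrtd.im_intCast]
        ring
    rw [h1, h]
    push_cast
    ring
  have hcop : IsCoprime z (star z) := by
    refine ⟨star z - (c:GaussianInt), -(c:GaussianInt), ?_⟩
    have h1 : z * star z = (((X^2 + 1 : ℤ)) : GaussianInt) := by
      ext
      · simp only [hz, Zsqrtd.re_mul, Zsqrtd.re_star, Zsqrtd.im_star, Zsqrtd.re_intCast]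
        ring
      · simp only [hz, Zsqrtd.im_mul, Zsqrtd.re_star, Zsqrtd.im_star, Zsqrtd.im_intCast]
        ring
    have h2 : z + star z = ((2*X : ℤ) : GaussianInt) := by
      ext
      · simp only [hz, Zsqrtd.re_add, Zsqrtd.re_star, Zsqrtd.re_intCast]; ring
      · simp only [hz, Zsqrtd.im_add, Zsqrtd.im_star, Zsqrtd.im_intCast]; ring
    have key : (star z - (c:GaussianInt)) * z + (-(c:GaussianInt)) * star z
        = z * star z - (c:GaussianInt) * (z + star z) := by ring
    rw [key, h1, h2]
    have : ((X^2+1 : ℤ) : GaussianInt) - (c:GaussianInt) * ((2*X:ℤ) : GaussianInt)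
        = (((X^2+1) - c*(2*X) : ℤ) : GaussianInt) := by push_cast; ring
    rw [this]
    have : (X^2+1) - c*(2*X) = 1 := by rw [hc]; ring
    rw [this]
    norm_cast
  obtain ⟨d, u, hu⟩ := exists_associated_pow_of_mul_eq_pow' hcop hzz
  -- absorb unit
  have hu4 : ((u : GaussianInt))^4 = 1 := gaussian_unit_pow_four _ u.isUnit
  obtain ⟨t, ht⟩ : ∃ t, q*q = 4*t+1 := by
    obtain ⟨k, hk⟩ := hodd
    exact ⟨k*k+k, by subst hk; ring⟩
  set w : GaussianInt := (u : GaussianInt)^q * d with hw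
  have hwq : w^q = z := by
    rw [hw, mul_pow, ← pow_mul, ht, pow_add, pow_mul, hu4, one_pow, pow_one, one_mul]
    rw [mul_comm]
    exact hu
  -- b = ±1
  set a : ℤ := w.re with ha
  set b : ℤ := w.im with hb
  have hsub : (w - star w) ∣ (z - star z) := by
    rw [← hwq, star_pow]
    exact sub_dvd_pow_sub_pow w (star w) q
  have hwsub : w - star w = (⟨0, 2*b⟩ : GaussianInt) := by
    ext <;> simp [Zsqrtd.re_star, Zsqrtd.im_star] <;> ring
  have hzsub : z - star z = (⟨0, 2⟩ : GaussianInt) := by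
    ext <;> simp [hz, Zsqrtd.re_star, Zsqrtd.im_star]
  have hb2 : b * b = 1 := by
    rw [hwsub, hzsub] at hsub
    obtain ⟨e, he⟩ := hsub
    have hne : ((⟨0,2⟩ : GaussianInt)).norm = ((⟨0,2*b⟩ : GaussianInt)).norm * e.norm := by
      rw [he, Zsqrtd.norm_mul]
    have hn1 : ((⟨0,2⟩ : GaussianInt)).norm = 4 := by rw [Zsqrtd.norm_def]; norm_num
    have hn2 : ((⟨0,2*b⟩ : GaussianInt)).norm = 4 * (b*b) := by rw [Zsqrtd.norm_def]; ring
    rw [hn1, hn2] at hne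
    have hdvd : b * b ∣ 1 := by
      refine ⟨e.norm, ?_⟩
      linarith
    have hbnn : 0 ≤ b * b := mul_self_nonneg b
    exact Int.eq_one_of_dvd_one hbnn hdvd
  -- norm facts
  have hnormz : z.norm = X*X + 1 := by
    rw [Zsqrtd.norm_def]
    simp [hz]
  have hnormw : w.norm = a*a + 1 := by
    rw [Zsqrtd.norm_def, ← ha, ← hb]
    nlinarith [hb2]
  have hnwq : (a*a+1)^q = X*X+1 := by
    rw [← hnormw, ← hnormz, ← hwq, gaussian_norm_pow]
  have haeven : Even a := by
    rcases Int.even_or_odd a with h1 | h1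
    · exact h1
    · exfalso
      have hXodd : Odd (X*X+1) := ⟨2*c*c, by rw [hc]; ring⟩
      have hev : Even ((a*a+1)^q) := by
        rw [Int.even_pow]
        refine ⟨?_, by omega⟩
        obtain ⟨s, hsa⟩ := h1
        exact ⟨2*s*s+2*s+1, by rw [hsa]; ring⟩
      rw [hnwq] at hev
      rcases hev with ⟨e, he⟩
      rcases hXodd with ⟨f, hf⟩
      omega
  have ha0 : a ≠ 0 := by
    intro h0
    rw [h0] at hnwq
    simp at hnwq
    nlinarith [hnwq, hX]
  -- imaginary part equation
  have hwab : w = (⟨a, b⟩ : GaussianInt) := by ext <;> rfl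
  have him : (1:ℤ) = ∑ j ∈ Finset.range n, b * (-1:ℤ)^(n-1-j) * (q.choose (2*j)) * a^(2*j) := by
    rw [← im_pow_eq a b hb2 q n h2n, ← hwab, hwq]
  -- multiply by b * (-1)^(n-1)
  set b' : ℤ := b * (-1:ℤ)^(n-1) with hb'
  have hb'2 : b' * b' = 1 := by
    have hs1 : ((-1:ℤ)^(n-1))^2 = 1 := by
      rw [← pow_mul, mul_comm, pow_mul]
      norm_num
    have : b' * b' = (b*b) * ((-1:ℤ)^(n-1))^2 := by rw [hb']; ring
    rw [this, hb2, hs1, mul_one]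
  have hkey : b' = ∑ j ∈ Finset.range n, (-1:ℤ)^j * (q.choose (2*j)) * a^(2*j) := by
    have := congrArg (fun x => b * (-1:ℤ)^(n-1) * x) him
    simp only [mul_one] at this
    rw [← hb'] at this
    rw [this, Finset.mul_sum]
    refine Finset.sum_congr rfl fun j hj => ?_
    have hjn : j < n := Finset.mem_range.mp hj
    have hpow : (-1:ℤ)^(n-1) * (-1:ℤ)^(n-1-j) = (-1:ℤ)^j := by
      rw [← pow_add]
      have : n-1 + (n-1-j) = j + 2*(n-1-j) := by omega
      rw [this, pow_add, pow_mul]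
      norm_num
    calc b * (-1:ℤ)^(n-1) * (b * (-1:ℤ)^(n-1-j) * (q.choose (2*j)) * a^(2*j))
        = (b*b) * ((-1:ℤ)^(n-1) * (-1:ℤ)^(n-1-j)) * (q.choose (2*j)) * a^(2*j) := by ring
      _ = (-1:ℤ)^j * (q.choose (2*j)) * a^(2*j) := by rw [hb2, hpow]; ring
  -- split first term
  have hsplit := Finset.sum_range_succ' (fun j => (-1:ℤ)^j * (q.choose (2*j)) * a^(2*j)) (n-1)
  rw [show n-1+1 = n by omega] at hsplit
  rw [hsplit] at hkey
  norm_num at hkey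
  set T : ℤ := ∑ j ∈ Finset.range (n-1), (-1:ℤ)^j * (q.choose (2*j+2)) * a^(2*j) with hT
  have hkey2 : b' - 1 = -(a^2 * T) := by
    have hterm : ∀ j ∈ Finset.range (n-1),
        (-1:ℤ)^(j+1) * (q.choose (2*(j+1))) * a^(2*(j+1))
          = -(a^2 * ((-1:ℤ)^j * (q.choose (2*j+2)) * a^(2*j))) := by
      intro j hj
      rw [show 2*(j+1) = 2*j+2 by ring]
      rw [show a^(2*j+2) = a^(2*j) * a^2 by ring]
      ring
    calc b' - 1 = ∑ j ∈ Finset.range (n-1),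
          (-1:ℤ)^(j+1) * (q.choose (2*(j+1))) * a^(2*(j+1)) := by rw [hkey]; ring
      _ = ∑ j ∈ Finset.range (n-1),
          -(a^2 * ((-1:ℤ)^j * (q.choose (2*j+2)) * a^(2*j))) := Finset.sum_congr rfl hterm
      _ = -(a^2 * T) := by rw [hT, Finset.mul_sum, Finset.sum_neg_distrib]
  rcases mul_self_eq_one_iff.mp hb'2 with h1 | h1
  · -- b' = 1 : T = 0
    rw [h1] at hkey2
    simp at hkey2
    have hT0 : T = 0 := by
      rcases hkey2 with h2 | h2
      · exact absurd h2 ha0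
      · exact h2
    have hrange : (q-1)/2 = n - 1 := by omega
    refine two_adic_key q hq hodd a haeven ha0 ?_
    rw [hrange, ← hT, hT0]
  · -- b' = -1 : 2 = a^2 * T, contradiction mod 4
    rw [h1] at hkey2
    have h2 : a^2 * T = 2 := by linarith
    obtain ⟨a0, ha0'⟩ := haeven
    have : (4:ℤ) * (a0*a0*T) = 2 := by
      rw [← h2, ha0']; ring
    omega


/-- The Diophantine equation `X² + 1 = Y^q` has no solutions with
`X, Y ≥ 2` and `q ≥ 2`. -/
theorem no_solution_sq_add_one_eq_pow (X Y : ℤ) (q : ℕ) (hX : 2 ≤ X) (hY : 2 ≤ Y)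
    (hq : 2 ≤ q) : X ^ 2 + 1 ≠ Y ^ q := by
  intro h
  rcases Nat.even_or_odd q with he | ho
  · -- q even : X^2 + 1 is a perfect square, impossible
    obtain ⟨m, hm⟩ := he
    have hm1 : 1 ≤ m := by omega
    have hz : X^2 + 1 = (Y^m)^2 := by
      rw [h, ← pow_mul]
      congr 1
      omega
    have hZ0 : (0:ℤ) ≤ Y^m := pow_nonneg (by linarith) m
    rcases le_or_gt (Y^m) X with hle | hlt
    · nlinarith
    · nlinarith
  · -- q odd : use the minimal (odd) prime factor
    set p := q.minFac with hp'
    have hp : p.Prime := Nat.minFac_prime (by omega)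
    have hpdvd : p ∣ q := Nat.minFac_dvd q
    have hp2 : p ≠ 2 := by
      intro h2
      have : (2:ℕ) ∣ q := h2 ▸ hpdvd
      have := Nat.odd_iff.mp ho
      omega
    have hpodd : Odd p := hp.odd_of_ne_two hp2
    obtain ⟨m, hm⟩ := hpdvd
    have hm1 : 1 ≤ m := by
      rcases Nat.eq_zero_or_pos m with h0 | h0
      · exfalso; rw [h0, mul_zero] at hm; omega
      · omega
    have hYm : 2 ≤ Y^m := le_trans hY (le_self_pow₀ (by linarith) (by omega))
    refine lebesgue_odd_prime X (Y^m) p hp hpodd hX hYm ?_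
    rw [h, ← pow_mul]
    congr 1
    rw [hm]
    exact Nat.mul_comm p m
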